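/- Let τ > 0, L ∈ ℕ with L ≥ 1, n ≥ 1, ℓ ∈ {0,…,L}, and f ∈ L²([0,τ];ℝ^n). Define f̃_j : [0,τ] → ℝ^n for j = −L, …, L by f̃_L(t) := (−1)^L f(t) and f̃_j(t) := ((−1)^L / (L−j−1)!) ∫_0^t (t−s)^{L−j−1} f(s) ds for j = −L, …, L−1. Define Λ_ℓ := Γ(τ)^{−1} [ f̃_{ℓ−1}(τ) f̃_{ℓ−2}(τ) ⋯ f̃_{ℓ−L}(τ) ]^⊤ ∈ ℝ^{L×n}. For b ∈ ℝ^n define ψ_b : [0,τ] → ℝ by ψ_b(t) := f̃_{ℓ−L}(t)^⊤ b − γ_L(t)^⊤ Λ_ℓ b. Then: (a) for every j = 0, …, L−1 and every t ∈ [0,τ], the j-th derivative of ψ_b satisfies ψ_b^{(j)}(t) = f̃_{j+ℓ−L}(t)^⊤ b − γ_{L−j}(t)^⊤ Λ_ℓ b; (b) ψ_b^{(j)}(0) = 0 and ψ_b^{(j)}(τ) = 0 for every j = 0, …, L−1; (c) ψ_b^{(L−1)} is absolutely continuous and its a.e. derivative satisfies ψ_b^{(L)}(t) = f̃_{ℓ}(t)^⊤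 b − γ_0(t)^⊤ Λ_ℓ b for almost every t ∈ [0,τ]; in particular ψ_b ∈ H^L_0[0,τ]. -/

import Mathlib

open MeasureTheory Matrix

/-- `D` is a chain of a.e. derivatives on `[0,τ]` up to order `L`: for each `ℓ < L`,
`D (ℓ+1)` is integrable on `[0,τ]` and `D ℓ` is its antiderivative there, i.e. `D ℓ` is
absolutely continuous on `[0,τ]` with a.e. derivative `D (ℓ+1)`. -/
def DerivChain (τ : ℝ) (L : ℕ) {E : Type} [NormedAddCommGroup E] [NormedSpace ℝ E]
    (D : ℕ → ℝ → E) : Prop :=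
  ∀ ℓ < L, IntervalIntegrable (D (ℓ + 1)) MeasureTheory.volume 0 τ ∧
    ∀ t ∈ Set.Icc (0 : ℝ) τ, D ℓ t = D ℓ 0 + ∫ s in (0 : ℝ)..t, D (ℓ + 1) s

/-- `f ∈ L²([0,τ]; E)`. -/
def MemL2 (τ : ℝ) {E : Type} [NormedAddCommGroup E] (f : ℝ → E) : Prop :=
  MeasureTheory.MemLp f 2 (MeasureTheory.volume.restrict (Set.Ioc (0 : ℝ) τ))

/-- `D` represents an element of `H^L_0[0,τ]` together with its derivatives: the chain
condition, `D L ∈ L²(0,τ)`, and `D ℓ` vanishes at `0` and at `τ` for all `ℓ < L`.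
The element of `H^L_0[0,τ]` itself is `D 0`. -/
def IsH0 (τ : ℝ) (L : ℕ) (D : ℕ → ℝ → ℝ) : Prop :=
  DerivChain τ L D ∧ MemL2 τ (D L) ∧ ∀ ℓ < L, D ℓ 0 = 0 ∧ D ℓ τ = 0

/-- `D` represents an element of the Sobolev space `H^M([0,τ]; E)` together with its
derivatives: the chain condition and `D M ∈ L²`. The element itself is `D 0`. -/
def IsHSob (τ : ℝ) (M : ℕ) {E : Type} [NormedAddCommGroup E] [NormedSpace ℝ E]
    (D : ℕ → ℝ → E) : Prop :=
  DerivChain τ M D ∧ MemL2 τ (D M)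

/-- The polynomial vector `γ_i(t) ∈ ℝ^L`: its `ℓ`-th component (`ℓ` 0-based, so the
paper's index is `ℓ+1`) is `(ℓ! / (i+ℓ)!) · t^{i+ℓ}`. -/
noncomputable def gammaVec (L i : ℕ) (t : ℝ) : Fin L → ℝ :=
  fun ℓ => ((ℓ : ℕ).factorial : ℝ) / ((i + (ℓ : ℕ)).factorial : ℝ) * t ^ (i + (ℓ : ℕ))

/-- `Γ(t) = [γ_1(t) ⋯ γ_L(t)]ᵀ ∈ ℝ^{L×L}`: the `i`-th row (0-based) is `γ_{i+1}(t)ᵀ`. -/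
noncomputable def GammaMat (L : ℕ) (t : ℝ) : Matrix (Fin L) (Fin L) ℝ :=
  Matrix.of fun i ℓ => gammaVec L ((i : ℕ) + 1) t ℓ

/-- `f̃_j : [0,τ] → ℝⁿ` for `j : ℤ`, `j ≤ L`: `f̃_L(t) = (-1)^L f(t)` and, for `j < L`,
`f̃_j(t) = ((-1)^L / (L-j-1)!) ∫_0^t (t-s)^{L-j-1} f(s) ds`. -/
noncomputable def fTilde (L : ℕ) {n : ℕ} (f : ℝ → Fin n → ℝ) (j : ℤ) (t : ℝ) : Fin n → ℝ :=
  if j = (L : ℤ) then (-1 : ℝ) ^ L • f t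
  else ((-1 : ℝ) ^ L / ((((L : ℤ) - 1 - j).toNat.factorial : ℕ) : ℝ)) •
    ∫ s in (0 : ℝ)..t, ((t - s) ^ ((L : ℤ) - 1 - j).toNat) • f s

/-- `Λ_ℓ = Γ(τ)⁻¹ [f̃_{ℓ-1}(τ)  f̃_{ℓ-2}(τ)  ⋯  f̃_{ℓ-L}(τ)]ᵀ ∈ ℝ^{L×n}`. -/
noncomputable def LambdaMat (τ : ℝ) (L : ℕ) {n : ℕ} (f : ℝ → Fin n → ℝ) (ℓ : ℕ) :
    Matrix (Fin L) (Fin n) ℝ :=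
  (GammaMat L τ)⁻¹ * Matrix.of (fun (i : Fin L) (c : Fin n) => fTilde L f ((ℓ : ℤ) - ((i : ℕ) + 1)) τ c)



section AuxStmt3

open intervalIntegral Polynomial


lemma aux_finite (a b : ℝ) : IsFiniteMeasure (volume.restrict (Set.Ioc a b)) := by
  constructor
  rw [Measure.restrict_apply_univ, Real.volume_Ioc]
  exact ENNReal.ofReal_lt_top

lemma aux_integrableOn_smul {E : Type} [NormedAddCommGroup E] [NormedSpace ℝ E] {f : ℝ → E} {a b : ℝ}
    (hf : IntegrableOn f (Set.Ioc a b)) {φ : ℝ → ℝ} (hφ : Continuous φ) :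
    IntegrableOn (fun s => φ s • f s) (Set.Ioc a b) := by
  obtain ⟨C, hC⟩ := (isCompact_Icc (a := a) (b := b)).exists_bound_of_continuousOn hφ.continuousOn
  refine Integrable.mono' (hf.norm.const_mul C)
    (hφ.aestronglyMeasurable.smul hf.aestronglyMeasurable) ?_
  filter_upwards [ae_restrict_mem measurableSet_Ioc] with s hs
  rw [norm_smul]
  exact mul_le_mul_of_nonneg_right (hC s (Set.Ioc_subset_Icc_self hs)) (norm_nonneg _)

lemma aux_intervalIntegrable_smul {E : Type} [NormedAddCommGroup E] [NormedSpace ℝ E] {f : ℝ → E} {a b : ℝ}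
    (hab : a ≤ b) (hf : IntegrableOn f (Set.Ioc a b)) {φ : ℝ → ℝ} (hφ : Continuous φ) :
    IntervalIntegrable (fun s => φ s • f s) volume a b := by
  rw [intervalIntegrable_iff, Set.uIoc_of_le hab]
  exact aux_integrableOn_smul hf hφ



lemma aux_fubini {g : ℝ → ℝ} {t : ℝ} (ht : 0 ≤ t)
    (hg : IntegrableOn g (Set.Ioc 0 t)) (K : ℕ) :
    ∫ s in (0:ℝ)..t, (t - s) ^ (K + 1) * g s
      = ∫ s in (0:ℝ)..t, ((K + 1 : ℝ) * ∫ u in (0:ℝ)..s, (s - u) ^ K * g u) := by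
  haveI : IsFiniteMeasure (volume.restrict (Set.Ioc (0:ℝ) t)) := by
    constructor; rw [Measure.restrict_apply_univ, Real.volume_Ioc]; exact ENNReal.ofReal_lt_top
  set μ := volume.restrict (Set.Ioc (0:ℝ) t) with hμ
  set F : ℝ → ℝ → ℝ := fun s u => (if u ≤ s then (K + 1 : ℝ) * (s - u) ^ K else 0) * g u with hF
  have hFmeas : AEStronglyMeasurable (Function.uncurry F) (μ.prod μ) := by
    have h1 : Measurable fun p : ℝ × ℝ => (if p.2 ≤ p.1 then (K + 1 : ℝ) * (p.1 - p.2) ^ K else 0) := by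
      refine Measurable.ite (measurableSet_le measurable_snd measurable_fst) ?_ measurable_const
      fun_prop
    have h2 : AEStronglyMeasurable (fun p : ℝ × ℝ => g p.2) (μ.prod μ) :=
      AEStronglyMeasurable.comp_snd hg.aestronglyMeasurable
    exact h1.aestronglyMeasurable.mul h2
  have hFint : Integrable (Function.uncurry F) (μ.prod μ) := by
    have hdom : Integrable (fun p : ℝ × ℝ => ((K + 1 : ℝ) * t ^ K) * ‖g p.2‖) (μ.prod μ) := by
      have hone : Integrable (fun _ : ℝ => (1 : ℝ)) μ := integrable_const 1
      have := (hone.mul_prod hg.norm).const_mul ((K + 1 : ℝ) * t ^ K)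
      simpa [one_mul] using this
    refine Integrable.mono' hdom hFmeas ?_
    have hprod : μ.prod μ = (volume.prod volume).restrict ((Set.Ioc (0:ℝ) t) ×ˢ (Set.Ioc (0:ℝ) t)) := by
      rw [hμ, Measure.prod_restrict]
    rw [hprod]
    filter_upwards [ae_restrict_mem (measurableSet_Ioc.prod measurableSet_Ioc)] with p hp
    obtain ⟨hp1, hp2⟩ := hp
    have hb : |if p.2 ≤ p.1 then (K + 1 : ℝ) * (p.1 - p.2) ^ K else 0| ≤ (K + 1 : ℝ) * t ^ K := by
      split_ifs with h
      · have h1 : (0:ℝ) ≤ p.1 - p.2 := by linarith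
        have h2 : p.1 - p.2 ≤ t := by
          have := hp2.1; have := hp1.2; linarith
        rw [abs_of_nonneg (mul_nonneg (by positivity) (pow_nonneg h1 K))]
        have := pow_le_pow_left₀ h1 h2 K
        have hK : (0:ℝ) ≤ (K:ℝ) + 1 := by positivity
        nlinarith
      · simp; positivity
    refine le_trans (le_of_eq ?_) (mul_le_mul_of_nonneg_right hb (abs_nonneg _))
    show |(if p.2 ≤ p.1 then (K + 1 : ℝ) * (p.1 - p.2) ^ K else 0) * g p.2| = _
    rw [abs_mul]; rfl
  rw [intervalIntegral.integral_of_le ht, intervalIntegral.integral_of_le ht]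
  have hRHS : ∫ s in Set.Ioc (0:ℝ) t, ((K + 1 : ℝ) * ∫ u in (0:ℝ)..s, (s - u) ^ K * g u)
      = ∫ s, (∫ u, F s u ∂μ) ∂μ := by
    refine setIntegral_congr_fun measurableSet_Ioc ?_
    intro s hs
    dsimp only
    have hs0 : (0:ℝ) ≤ s := le_of_lt hs.1
    rw [intervalIntegral.integral_of_le hs0]
    have h1 : ∫ u in Set.Ioc (0:ℝ) s, (s - u) ^ K * g u
        = ∫ u, (Set.Ioc (0:ℝ) s).indicator (fun u => (s - u) ^ K * g u) u ∂μ := by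
      rw [hμ, MeasureTheory.integral_indicator measurableSet_Ioc,
        Measure.restrict_restrict measurableSet_Ioc,
        Set.inter_eq_left.mpr (Set.Ioc_subset_Ioc_right hs.2)]
    rw [h1, ← MeasureTheory.integral_const_mul]
    refine integral_congr_ae ?_
    filter_upwards [ae_restrict_mem measurableSet_Ioc] with u hu
    by_cases h2 : u ≤ s
    · rw [Set.indicator_of_mem (Set.mem_Ioc.mpr ⟨hu.1, h2⟩)]
      rw [hF]; simp only [if_pos h2]; ring
    · rw [Set.indicator_of_notMem (fun c => h2 c.2)]
      rw [hF]; simp [h2]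
  rw [hRHS, integral_integral_swap hFint]
  refine (setIntegral_congr_fun measurableSet_Ioc ?_).symm
  intro u hu
  dsimp only
  have key : ∫ s, F s u ∂μ = (∫ s, (if u ≤ s then (K + 1 : ℝ) * (s - u) ^ K else 0) ∂μ) * g u := by
    rw [← MeasureTheory.integral_mul_const]
  have hut : u ≤ t := hu.2
  have hinner : ∫ s, (if u ≤ s then (K + 1 : ℝ) * (s - u) ^ K else 0) ∂μ = (t - u) ^ (K + 1) := by
    have h0 : ∫ s, (if u ≤ s then (K + 1 : ℝ) * (s - u) ^ K else 0) ∂μ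
        = ∫ s, (Set.Ici u).indicator (fun s => (K + 1 : ℝ) * (s - u) ^ K) s ∂μ := by
      simp only [Set.indicator_apply, Set.mem_Ici]
    rw [h0, hμ, ← MeasureTheory.integral_indicator measurableSet_Ioc, Set.indicator_indicator,
      MeasureTheory.integral_indicator (measurableSet_Ioc.inter measurableSet_Ici)]
    have hset : Set.Ioc (0:ℝ) t ∩ Set.Ici u = Set.Icc u t := by
      ext x
      simp only [Set.mem_inter_iff, Set.mem_Ioc, Set.mem_Ici, Set.mem_Icc]
      constructor
      · rintro ⟨⟨_, h2⟩, h3⟩; exact ⟨h3, h2⟩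
      · rintro ⟨h1, h2⟩; exact ⟨⟨lt_of_lt_of_le hu.1 h1, h2⟩, h1⟩
    rw [hset, integral_Icc_eq_integral_Ioc, ← intervalIntegral.integral_of_le hut]
    have := intervalIntegral.integral_comp_sub_right (a := u) (b := t)
      (fun x => (K + 1 : ℝ) * x ^ K) u
    rw [this]
    simp only [sub_self]
    rw [intervalIntegral.integral_const_mul, integral_pow]
    rw [zero_pow (by omega : K + 1 ≠ 0)]
    push_cast
    field_simp
    simp
  rw [key, hinner]


noncomputable def Gfun (g : ℝ → ℝ) (K : ℕ) (t : ℝ) : ℝ :=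
  ∫ s in (0:ℝ)..t, (t - s) ^ K * g s

lemma Gfun_zero (g : ℝ → ℝ) (K : ℕ) : Gfun g K 0 = 0 := by
  simp [Gfun]

lemma Gfun_zero_pow (g : ℝ → ℝ) (t : ℝ) : Gfun g 0 t = ∫ s in (0:ℝ)..t, g s := by
  simp [Gfun]

lemma Gfun_succ {g : ℝ → ℝ} {τ : ℝ} (hg : IntegrableOn g (Set.Ioc 0 τ)) (K : ℕ)
    {t : ℝ} (ht : t ∈ Set.Icc 0 τ) :
    Gfun g (K + 1) t = ∫ s in (0:ℝ)..t, ((K + 1 : ℝ) * Gfun g K s) :=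
  aux_fubini ht.1 (hg.mono_set (Set.Ioc_subset_Ioc_right ht.2)) K

lemma Gfun_cont {g : ℝ → ℝ} {τ : ℝ} (hτ : 0 ≤ τ) (hg : IntegrableOn g (Set.Ioc 0 τ)) :
    ∀ K, ContinuousOn (Gfun g K) (Set.Icc 0 τ) := by
  have huIcc : Set.uIcc (0:ℝ) τ = Set.Icc 0 τ := Set.uIcc_of_le hτ
  have hgIcc : IntegrableOn g (Set.Icc 0 τ) := by
    rwa [integrableOn_Icc_iff_integrableOn_Ioc]
  intro K
  induction K with
  | zero =>
    have h := intervalIntegral.continuousOn_primitive_interval (a := 0) (b := τ)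
      (μ := volume) (f := g) (by rwa [huIcc])
    rw [huIcc] at h
    exact h.congr fun t _ => Gfun_zero_pow g t
  | succ K ih =>
    have hint : IntegrableOn (fun s => (K + 1 : ℝ) * Gfun g K s) (Set.uIcc 0 τ) := by
      rw [huIcc]
      exact (ih.integrableOn_Icc).const_mul _
    have h := intervalIntegral.continuousOn_primitive_interval (a := 0) (b := τ)
      (μ := volume) (f := fun s => (K + 1 : ℝ) * Gfun g K s) hint
    rw [huIcc] at h
    exact h.congr fun t htt => Gfun_succ hg K htt

lemma Gfun_intervalIntegrable {g : ℝ → ℝ} {τ : ℝ} (hτ : 0 ≤ τ)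
    (hg : IntegrableOn g (Set.Ioc 0 τ)) (K : ℕ) :
    IntervalIntegrable (Gfun g K) volume 0 τ :=
  ((Gfun_cont hτ hg K).mono (by rw [Set.uIcc_of_le hτ])).intervalIntegrable










noncomputable def dotCLM {n : ℕ} (b : Fin n → ℝ) : (Fin n → ℝ) →L[ℝ] ℝ :=
  LinearMap.toContinuousLinearMap
    { toFun := fun v => v ⬝ᵥ b
      map_add' := fun x y => add_dotProduct x y b
      map_smul' := fun c x => smul_dotProduct c x b }

@[simp] lemma dotCLM_apply {n : ℕ} (b : Fin n → ℝ) (v : Fin n → ℝ) : dotCLM b v = v ⬝ᵥ b := rfl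

/-- reduction of `fTilde ⬝ᵥ b` to the scalar `Gfun`. -/
lemma fTilde_dot {L n : ℕ} {f : ℝ → Fin n → ℝ} {τ : ℝ} (hfi : IntegrableOn f (Set.Ioc 0 τ))
    (b : Fin n → ℝ) {m : ℤ} (hm : m < (L : ℤ)) {t : ℝ} (ht : t ∈ Set.Icc 0 τ) :
    fTilde L f m t ⬝ᵥ b
      = ((-1 : ℝ) ^ L / ((((L : ℤ) - 1 - m).toNat.factorial : ℕ) : ℝ))
          * Gfun (fun s => f s ⬝ᵥ b) (((L : ℤ) - 1 - m).toNat) t := by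
  set K := (((L : ℤ) - 1 - m).toNat) with hK
  rw [fTilde, if_neg hm.ne]
  rw [smul_dotProduct, smul_eq_mul]
  congr 1
  have hint : IntervalIntegrable (fun s => ((t - s) ^ K) • f s) volume 0 t :=
    aux_intervalIntegrable_smul ht.1 (hfi.mono_set (Set.Ioc_subset_Ioc_right ht.2))
      (by fun_prop)
  have := (dotCLM b).intervalIntegral_comp_comm hint
  rw [show (∫ s in (0:ℝ)..t, (t - s) ^ K • f s) ⬝ᵥ b
      = dotCLM b (∫ s in (0:ℝ)..t, (t - s) ^ K • f s) from rfl, ← this]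
  rw [Gfun]
  congr 1
  funext s
  simp [smul_eq_mul, mul_comm]

lemma fTilde_dot_top {L n : ℕ} (f : ℝ → Fin n → ℝ) (b : Fin n → ℝ) (t : ℝ) :
    fTilde L f (L : ℤ) t ⬝ᵥ b = (-1 : ℝ) ^ L * (f t ⬝ᵥ b) := by
  rw [fTilde, if_pos rfl, smul_dotProduct, smul_eq_mul]

lemma fTilde_dot_zero {L n : ℕ} (f : ℝ → Fin n → ℝ) (b : Fin n → ℝ) {m : ℤ} (hm : m < (L : ℤ)) :
    fTilde L f m 0 ⬝ᵥ b = 0 := by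
  rw [fTilde, if_neg hm.ne, intervalIntegral.integral_same, smul_zero, zero_dotProduct]

lemma gammaVec_dot_zero {L i : ℕ} (hi : 1 ≤ i) (w : Fin L → ℝ) :
    gammaVec L i 0 ⬝ᵥ w = 0 := by
  unfold gammaVec dotProduct
  refine Finset.sum_eq_zero fun c _ => ?_
  have : i + (c : ℕ) ≠ 0 := by omega
  simp [zero_pow this]

lemma gammaVec_cont {L i : ℕ} (w : Fin L → ℝ) :
    Continuous fun t => gammaVec L i t ⬝ᵥ w := by
  unfold gammaVec dotProduct
  fun_prop

lemma gammaVec_integral (L i : ℕ) (w : Fin L → ℝ) (t : ℝ) :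
    ∫ s in (0:ℝ)..t, (gammaVec L i s ⬝ᵥ w) = gammaVec L (i + 1) t ⬝ᵥ w := by
  unfold gammaVec dotProduct
  rw [intervalIntegral.integral_finset_sum (fun c _ => (Continuous.intervalIntegrable (by fun_prop) 0 t))]
  refine Finset.sum_congr rfl fun c _ => ?_
  have h1 : ∀ s : ℝ, ((c : ℕ).factorial : ℝ) / ((i + (c : ℕ)).factorial : ℝ) * s ^ (i + (c : ℕ)) * w c
      = (((c : ℕ).factorial : ℝ) / ((i + (c : ℕ)).factorial : ℝ) * w c) * s ^ (i + (c : ℕ)) := by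
    intro s; ring
  simp_rw [h1]
  rw [intervalIntegral.integral_const_mul, integral_pow]
  rw [zero_pow (by omega : i + (c : ℕ) + 1 ≠ 0)]
  have h2 : (i + 1 + (c : ℕ)) = (i + (c : ℕ)) + 1 := by omega
  rw [h2, Nat.factorial_succ]
  have h3 : (((i + (c : ℕ)).factorial : ℝ)) ≠ 0 := Nat.cast_ne_zero.mpr (Nat.factorial_ne_zero _)
  have h4 : ((i + (c : ℕ) + 1 : ℕ) : ℝ) ≠ 0 := Nat.cast_ne_zero.mpr (by omega)
  push_cast
  field_simp
  ring







lemma beta_int {τ : ℝ} (hτ : 0 ≤ τ) :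
    ∀ i ℓ : ℕ, ∫ s in (0:ℝ)..τ, (τ - s) ^ i * s ^ ℓ
      = ((i.factorial : ℝ) * (ℓ.factorial : ℝ) / ((i + ℓ + 1).factorial : ℝ)) * τ ^ (i + ℓ + 1) := by
  intro i
  induction i with
  | zero =>
    intro ℓ
    simp only [pow_zero, one_mul, integral_pow, Nat.factorial_zero, Nat.cast_one, zero_add]
    rw [zero_pow (by omega : ℓ + 1 ≠ 0), Nat.factorial_succ]
    have h3 : ((ℓ.factorial : ℝ)) ≠ 0 := Nat.cast_ne_zero.mpr (Nat.factorial_ne_zero _)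
    have h4 : ((ℓ : ℝ) + 1) ≠ 0 := by positivity
    push_cast
    field_simp
    ring
  | succ i ih =>
    intro ℓ
    -- integration by parts identity
    have hderiv : ∀ s ∈ Set.uIcc (0:ℝ) τ, HasDerivAt (fun s => (τ - s) ^ (i + 1) * s ^ (ℓ + 1))
        ((ℓ + 1 : ℝ) * ((τ - s) ^ (i + 1) * s ^ ℓ) - (i + 1 : ℝ) * ((τ - s) ^ i * s ^ (ℓ + 1))) s := by
      intro s _
      have hd1 : HasDerivAt (fun s : ℝ => (τ - s) ^ (i + 1))
          ((i + 1 : ℝ) * (τ - s) ^ i * (-1)) s := by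
        have := ((hasDerivAt_id s).const_sub τ).fun_pow (i + 1)
        simpa using this
      have hd2 : HasDerivAt (fun s : ℝ => s ^ (ℓ + 1)) ((ℓ + 1 : ℝ) * s ^ ℓ) s := by
        have := hasDerivAt_pow (ℓ + 1) s
        simpa using this
      have := hd1.mul hd2
      refine this.congr_deriv ?_
      push_cast
      ring
    have hcont : IntervalIntegrable (fun s => (ℓ + 1 : ℝ) * ((τ - s) ^ (i + 1) * s ^ ℓ)
        - (i + 1 : ℝ) * ((τ - s) ^ i * s ^ (ℓ + 1))) volume 0 τ :=
      (Continuous.intervalIntegrable (by fun_prop) 0 τ)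
    have key := intervalIntegral.integral_eq_sub_of_hasDerivAt hderiv hcont
    rw [sub_self, zero_pow (by omega : i + 1 ≠ 0), zero_mul, zero_pow (by omega : ℓ + 1 ≠ 0),
      mul_zero, sub_zero] at key
    have hsplit : ∫ s in (0:ℝ)..τ, ((ℓ + 1 : ℝ) * ((τ - s) ^ (i + 1) * s ^ ℓ)
        - (i + 1 : ℝ) * ((τ - s) ^ i * s ^ (ℓ + 1)))
        = (ℓ + 1 : ℝ) * (∫ s in (0:ℝ)..τ, (τ - s) ^ (i + 1) * s ^ ℓ)
          - (i + 1 : ℝ) * (∫ s in (0:ℝ)..τ, (τ - s) ^ i * s ^ (ℓ + 1)) := by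
      rw [intervalIntegral.integral_sub ((Continuous.intervalIntegrable (by fun_prop) 0 τ))
        ((Continuous.intervalIntegrable (by fun_prop) 0 τ)),
        intervalIntegral.integral_const_mul, intervalIntegral.integral_const_mul]
    rw [hsplit, ih (ℓ + 1)] at key
    have h1 : (ℓ + 1 : ℝ) ≠ 0 := by positivity
    have heq : (∫ s in (0:ℝ)..τ, (τ - s) ^ (i + 1) * s ^ ℓ)
        = (i + 1 : ℝ) / (ℓ + 1 : ℝ)
          * (((i.factorial : ℝ) * ((ℓ+1).factorial : ℝ) / ((i + (ℓ+1) + 1).factorial : ℝ)) * τ ^ (i + (ℓ+1) + 1)) := by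
      field_simp at key ⊢
      linarith [key]
    rw [heq]
    have e1 : i + (ℓ + 1) + 1 = i + 1 + ℓ + 1 := by omega
    rw [e1, Nat.factorial_succ (ℓ), Nat.factorial_succ i]
    have h3 : ((ℓ.factorial : ℝ)) ≠ 0 := Nat.cast_ne_zero.mpr (Nat.factorial_ne_zero _)
    have h5 : (((i + 1 + ℓ + 1).factorial : ℝ)) ≠ 0 := Nat.cast_ne_zero.mpr (Nat.factorial_ne_zero _)
    push_cast
    field_simp

lemma gamma_mulVec_integral {L : ℕ} {τ : ℝ} (hτ : 0 ≤ τ) (v : Fin L → ℝ) (i : Fin L) :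
    (GammaMat L τ).mulVec v i
      = (1 / (((i : ℕ).factorial : ℝ)))
        * ∫ s in (0:ℝ)..τ, (τ - s) ^ (i : ℕ) * (∑ c : Fin L, v c * s ^ (c : ℕ)) := by
  have hswap : ∀ s : ℝ, (τ - s) ^ (i : ℕ) * (∑ c : Fin L, v c * s ^ (c : ℕ))
      = ∑ c : Fin L, v c * ((τ - s) ^ (i : ℕ) * s ^ (c : ℕ)) := by
    intro s; rw [Finset.mul_sum]; exact Finset.sum_congr rfl fun c _ => by ring
  simp_rw [hswap]
  rw [intervalIntegral.integral_finset_sum (fun c _ => (Continuous.intervalIntegrable (by fun_prop) 0 τ))]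
  simp_rw [intervalIntegral.integral_const_mul, beta_int hτ]
  rw [Matrix.mulVec, Finset.mul_sum]
  refine Finset.sum_congr rfl fun c _ => ?_
  show gammaVec L ((i : ℕ) + 1) τ c * v c = _
  rw [gammaVec]
  have e1 : (i : ℕ) + (c : ℕ) + 1 = (i : ℕ) + 1 + (c : ℕ) := by omega
  rw [e1]
  have h3 : (((i : ℕ).factorial : ℝ)) ≠ 0 := Nat.cast_ne_zero.mpr (Nat.factorial_ne_zero _)
  have h5 : ((((i : ℕ) + 1 + (c : ℕ)).factorial : ℝ)) ≠ 0 := Nat.cast_ne_zero.mpr (Nat.factorial_ne_zero _)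
  field_simp

lemma gamma_det_isUnit {L : ℕ} {τ : ℝ} (hτ : 0 < τ) : IsUnit (GammaMat L τ).det := by
  rw [isUnit_iff_ne_zero]
  intro h0
  obtain ⟨v, hv0, hveq⟩ := (Matrix.exists_mulVec_eq_zero_iff).mpr h0
  set P : Polynomial ℝ := ∑ c : Fin L, Polynomial.C (v c) * Polynomial.X ^ (c : ℕ) with hP
  have hPeval : ∀ s : ℝ, P.eval s = ∑ c : Fin L, v c * s ^ (c : ℕ) := by
    intro s; rw [hP, Polynomial.eval_finset_sum]; simp
  have hPc : Continuous fun s : ℝ => P.eval s := P.continuous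
  have hLpos : 1 ≤ L := by
    by_contra hc
    have hL0 : L = 0 := by omega
    subst hL0
    exact hv0 (funext fun c => c.elim0)
  have hPdeg : P.natDegree < max L 1 := by
    have h : P.natDegree ≤ L - 1 := by
      refine Polynomial.natDegree_sum_le_of_forall_le _ _ fun c _ => ?_
      refine le_trans (Polynomial.natDegree_mul_le) ?_
      simp [Polynomial.natDegree_X_pow]
      omega
    have hmax : max L 1 = L := max_eq_left hLpos
    omega
  have hroots : ∀ k, k < L → ∫ s in (0:ℝ)..τ, (τ - s) ^ k * P.eval s = 0 := by
    intro k hk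
    have hcomp := congrFun hveq ⟨k, hk⟩
    rw [gamma_mulVec_integral hτ.le, Pi.zero_apply] at hcomp
    simp_rw [← hPeval] at hcomp
    have h3 : (((k).factorial : ℝ)) ≠ 0 := Nat.cast_ne_zero.mpr (Nat.factorial_ne_zero _)
    exact (mul_eq_zero.mp hcomp).resolve_left (one_div_ne_zero h3)
  -- Q = P ∘ (τ - X)
  set Q : Polynomial ℝ := P.comp (Polynomial.C τ - Polynomial.X) with hQ
  have hQeval : ∀ s : ℝ, Q.eval (τ - s) = P.eval s := by
    intro s
    rw [hQ, Polynomial.eval_comp]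
    simp
  have hQdeg : Q.natDegree < max L 1 := by
    rw [hQ, Polynomial.natDegree_comp]
    have : (Polynomial.C τ - Polynomial.X : Polynomial ℝ).natDegree = 1 := by
      rw [show (Polynomial.C τ - Polynomial.X : Polynomial ℝ) = -(Polynomial.X - Polynomial.C τ) by ring,
        Polynomial.natDegree_neg, Polynomial.natDegree_X_sub_C]
    rw [this, mul_one]
    exact hPdeg
  have hsq : ∫ s in (0:ℝ)..τ, (P.eval s) ^ 2 = 0 := by
    have hrw : ∀ s : ℝ, (P.eval s) ^ 2
        = ∑ k ∈ Finset.range (max L 1), Q.coeff k * ((τ - s) ^ k * P.eval s) := by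
      intro s
      have := Polynomial.eval_eq_sum_range' hQdeg (τ - s)
      rw [hQeval s] at this
      calc (P.eval s) ^ 2 = P.eval s * P.eval s := sq (P.eval s) ▸ by ring
        _ = (∑ k ∈ Finset.range (max L 1), Q.coeff k * (τ - s) ^ k) * P.eval s := by rw [← this]
        _ = _ := by rw [Finset.sum_mul]; exact Finset.sum_congr rfl fun k _ => by ring
    simp_rw [hrw]
    rw [intervalIntegral.integral_finset_sum (fun k _ => (Continuous.intervalIntegrable (by fun_prop) 0 τ))]
    refine Finset.sum_eq_zero fun k hk => ?_
    rw [intervalIntegral.integral_const_mul]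
    rcases Nat.lt_or_ge k L with h | h
    · rw [hroots k h, mul_zero]
    · -- k ≥ L: then k ≥ L and k < max L 1 forces L = 0; but then P = 0 sum empty
      have hkk := Finset.mem_range.mp hk
      omega
  -- conclude P = 0 on a set of positive measure, contradiction
  have hPint : IntegrableOn (fun s => (P.eval s) ^ 2) (Set.Ioc 0 τ) :=
    (hPc.pow 2).integrableOn_Ioc
  rw [intervalIntegral.integral_of_le hτ.le] at hsq
  have hae := (integral_eq_zero_iff_of_nonneg
    (fun s => sq_nonneg (P.eval s)) hPint).mp hsq
  have hP0 : P = 0 := by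
    by_contra hP0
    have hfin : Set.Finite {x : ℝ | P.IsRoot x} := Polynomial.finite_setOf_isRoot hP0
    have hzero : volume.restrict (Set.Ioc 0 τ) {x : ℝ | P.IsRoot x}ᶜ = 0 := by
      have hmeas0 : volume.restrict (Set.Ioc 0 τ)
          {a : ℝ | ¬ ((fun s => (P.eval s)^2) a = (0 : ℝ → ℝ) a)} = 0 := ae_iff.mp hae
      have hsetEq : {a : ℝ | ¬ ((fun s => (P.eval s)^2) a = (0 : ℝ → ℝ) a)}
          = {x : ℝ | P.IsRoot x}ᶜ := by
        ext x
        simp only [Set.mem_setOf_eq, Set.mem_compl_iff, Pi.zero_apply, Polynomial.IsRoot]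
        rw [pow_eq_zero_iff (by omega : 2 ≠ 0)]
      rwa [hsetEq] at hmeas0
    have hroot0 : volume.restrict (Set.Ioc 0 τ) {x : ℝ | P.IsRoot x} = 0 := by
      refine le_antisymm ?_ zero_le
      calc volume.restrict (Set.Ioc 0 τ) {x : ℝ | P.IsRoot x}
          ≤ volume {x : ℝ | P.IsRoot x} := Measure.restrict_le_self _
        _ = 0 := hfin.measure_zero _
    have htot : volume.restrict (Set.Ioc 0 τ) Set.univ = 0 := by
      have := measure_union_le (μ := volume.restrict (Set.Ioc 0 τ))
        {x : ℝ | P.IsRoot x} {x : ℝ | P.IsRoot x}ᶜ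
      rw [Set.union_compl_self, hroot0, hzero] at this
      simpa using this
    rw [Measure.restrict_apply_univ, Real.volume_Ioc] at htot
    have : (0:ℝ) < τ - 0 := by linarith
    rw [ENNReal.ofReal_eq_zero] at htot
    linarith
  apply hv0
  funext c
  have : P.coeff (c : ℕ) = v c := by
    rw [hP, Polynomial.finset_sum_coeff]
    rw [Finset.sum_eq_single c]
    · simp
    · intro c' _ hne
      simp only [Polynomial.coeff_C_mul, Polynomial.coeff_X_pow]
      rw [if_neg (fun hc => hne (Fin.ext hc.symm))]
      ring
    · intro h; exact absurd (Finset.mem_univ c) h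
  rw [hP0] at this
  simp only [Polynomial.coeff_zero] at this
  rw [Pi.zero_apply, ← this]


lemma aux_memL2 {τ : ℝ} {h : ℝ → ℝ} (hh : ContinuousOn h (Set.Icc 0 τ)) :
    MemLp h 2 (volume.restrict (Set.Ioc 0 τ)) := by
  haveI := aux_finite 0 τ
  obtain ⟨C, hC⟩ := (isCompact_Icc (a := (0:ℝ)) (b := τ)).exists_bound_of_continuousOn hh
  refine MemLp.of_bound ((hh.mono Set.Ioc_subset_Icc_self).aestronglyMeasurable measurableSet_Ioc) C ?_
  filter_upwards [ae_restrict_mem measurableSet_Ioc] with x hx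
  exact hC x (Set.Ioc_subset_Icc_self hx)

end AuxStmt3

/-- **Proposition 3.3, computational core.** The family
`Ψ j t := f̃_{j+ℓ-L}(t)ᵀ b - γ_{L-j}(t)ᵀ Λ_ℓ b` (for `j = 0,…,L`) is the derivative chain
of `ψ_b = Ψ 0`; in particular it satisfies the stated derivative formulae on `[0,τ]`
(claim (a)), vanishes together with its first `L-1` derivatives at `0` and `τ`
(claim (b)), and `ψ_b ∈ H^L_0[0,τ]` with a.e. `L`-th derivative
`f̃_ℓ(t)ᵀ b - γ_0(t)ᵀ Λ_ℓ b` (claim (c)). -/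
theorem stmt_3 (τ : ℝ) (hτ : 0 < τ) (L : ℕ) (hL : 1 ≤ L) (n : ℕ) (hn : 1 ≤ n)
    (ℓ : ℕ) (hℓ : ℓ ≤ L) (f : ℝ → Fin n → ℝ) (hf : MemL2 τ f) (b : Fin n → ℝ) :
    IsH0 τ L (fun j t =>
      fTilde L f ((j : ℤ) + (ℓ : ℤ) - (L : ℤ)) t ⬝ᵥ b -
        gammaVec L (L - j) t ⬝ᵥ (LambdaMat τ L f ℓ).mulVec b) := by
  classical
  haveI hfin : IsFiniteMeasure (volume.restrict (Set.Ioc (0:ℝ) τ)) := aux_finite 0 τ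
  set g : ℝ → ℝ := fun t => f t ⬝ᵥ b with hgdef
  have hg2 : MemLp g 2 (volume.restrict (Set.Ioc (0:ℝ) τ)) := (dotCLM b).comp_memLp' hf
  have hgInt : IntegrableOn g (Set.Ioc 0 τ) := hg2.integrable (by norm_num)
  have hfInt : IntegrableOn f (Set.Ioc 0 τ) := hf.integrable (by norm_num)
  have hgII : IntervalIntegrable g volume 0 τ := by
    rw [intervalIntegrable_iff, Set.uIoc_of_le hτ.le]; exact hgInt
  set w : Fin L → ℝ := (LambdaMat τ L f ℓ).mulVec b with hwdef
  -- scalar reduction of the fTilde part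
  have hA : ∀ j : ℕ, (j:ℤ) + (ℓ:ℤ) - (L:ℤ) < (L:ℤ) → ∀ t ∈ Set.Icc (0:ℝ) τ,
      fTilde L f ((j:ℤ) + (ℓ:ℤ) - (L:ℤ)) t ⬝ᵥ b
        = (-1:ℝ)^L / (((2*L - 1 - j - ℓ).factorial : ℕ) : ℝ) * Gfun g (2*L - 1 - j - ℓ) t := by
    intro j hj t ht
    have htn : ((L:ℤ) - 1 - ((j:ℤ) + (ℓ:ℤ) - (L:ℤ))).toNat = 2*L - 1 - j - ℓ := by omega
    rw [fTilde_dot hfInt b hj ht, htn]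
  -- vanishing at 0
  have hΨ0 : ∀ j : ℕ, j < L →
      fTilde L f ((j:ℤ) + (ℓ:ℤ) - (L:ℤ)) 0 ⬝ᵥ b - gammaVec L (L - j) 0 ⬝ᵥ w = 0 := by
    intro j hj
    rw [fTilde_dot_zero f b (by omega), gammaVec_dot_zero (by omega) w, sub_zero]
  -- vanishing at τ
  have hdet : IsUnit (GammaMat L τ).det := gamma_det_isUnit hτ
  have hΨτ : ∀ j : ℕ, j < L →
      gammaVec L (L - j) τ ⬝ᵥ w = fTilde L f ((j:ℤ) + (ℓ:ℤ) - (L:ℤ)) τ ⬝ᵥ b := by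
    intro j hj
    have hiv : L - 1 - j < L := by omega
    set i : Fin L := ⟨L - 1 - j, hiv⟩ with hidef
    have hrow : gammaVec L (L - j) τ = fun c => GammaMat L τ i c := by
      funext c
      show gammaVec L (L - j) τ c = gammaVec L ((i : ℕ) + 1) τ c
      have : (i : ℕ) + 1 = L - j := by simp only [hidef]; omega
      rw [this]
    rw [hrow]
    have h1 : (fun c => GammaMat L τ i c) ⬝ᵥ w = (GammaMat L τ).mulVec w i := rfl
    rw [h1, hwdef, LambdaMat, Matrix.mulVec_mulVec, ← Matrix.mul_assoc,
      Matrix.mul_nonsing_inv _ hdet, Matrix.one_mul]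
    have h2 : ((Matrix.of fun (i : Fin L) (c : Fin n) =>
        fTilde L f ((ℓ : ℤ) - ((i : ℕ) + 1)) τ c).mulVec b) i
        = fTilde L f ((ℓ : ℤ) - (((i : ℕ) : ℤ) + 1)) τ ⬝ᵥ b := rfl
    rw [h2]
    have h3 : (ℓ : ℤ) - (((i : ℕ) : ℤ) + 1) = (j:ℤ) + (ℓ:ℤ) - (L:ℤ) := by
      simp only [hidef]
      omega
    rw [h3]
  -- interval integrability of level j+1 (for j < L)
  have hInt : ∀ j : ℕ, j < L → IntervalIntegrable
      (fun t => fTilde L f (((j+1:ℕ):ℤ) + (ℓ:ℤ) - (L:ℤ)) t ⬝ᵥ b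
        - gammaVec L (L - (j+1)) t ⬝ᵥ w) volume 0 τ := by
    intro j hj
    refine IntervalIntegrable.sub ?_ ((gammaVec_cont w).intervalIntegrable 0 τ)
    by_cases hcase : ((j+1:ℕ):ℤ) + (ℓ:ℤ) - (L:ℤ) = (L:ℤ)
    · have heq : (fun t => fTilde L f (((j+1:ℕ):ℤ) + (ℓ:ℤ) - (L:ℤ)) t ⬝ᵥ b)
          = fun t => (-1:ℝ)^L * g t := by
        funext t
        rw [hcase, fTilde_dot_top]
      rw [heq]
      exact hgII.const_mul _
    · have hj1 : ((j+1:ℕ):ℤ) + (ℓ:ℤ) - (L:ℤ) < (L:ℤ) := by omega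
      rw [intervalIntegrable_iff, Set.uIoc_of_le hτ.le]
      have hcont : ContinuousOn
          (fun t => (-1:ℝ)^L / (((2*L - 1 - (j+1) - ℓ).factorial : ℕ) : ℝ)
            * Gfun g (2*L - 1 - (j+1) - ℓ) t) (Set.Icc 0 τ) :=
        continuousOn_const.mul (Gfun_cont hτ.le hgInt _)
      refine (hcont.integrableOn_Icc.mono_set Set.Ioc_subset_Icc_self).congr_fun ?_
        measurableSet_Ioc
      intro s hs
      exact (hA (j+1) hj1 s (Set.Ioc_subset_Icc_self hs)).symm
  refine ⟨?_, ?_, ?_⟩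
  · -- DerivChain
    intro j hj
    refine ⟨hInt j hj, ?_⟩
    intro t ht
    have ht' : Set.uIcc (0:ℝ) t ⊆ Set.Icc 0 τ := by
      rw [Set.uIcc_of_le ht.1]; exact Set.Icc_subset_Icc le_rfl ht.2
    simp only []
    rw [hΨ0 j hj, zero_add]
    have hAint : IntervalIntegrable
        (fun s => fTilde L f (((j+1:ℕ):ℤ) + (ℓ:ℤ) - (L:ℤ)) s ⬝ᵥ b) volume 0 t := by
      have h1 := hInt j hj
      have h2 : IntervalIntegrable (fun s => gammaVec L (L - (j+1)) s ⬝ᵥ w) volume 0 τ :=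
        (gammaVec_cont w).intervalIntegrable 0 τ
      have hsub : Set.uIcc (0:ℝ) t ⊆ Set.uIcc (0:ℝ) τ := by
        rw [Set.uIcc_of_le hτ.le, Set.uIcc_of_le ht.1]
        exact Set.Icc_subset_Icc le_rfl ht.2
      have h3 := ((h1.add h2).mono_set hsub)
      have h4 : (fun s => (fTilde L f (((j+1:ℕ):ℤ) + (ℓ:ℤ) - (L:ℤ)) s ⬝ᵥ b
          - gammaVec L (L - (j+1)) s ⬝ᵥ w) + gammaVec L (L - (j+1)) s ⬝ᵥ w)
          = (fun s => fTilde L f (((j+1:ℕ):ℤ) + (ℓ:ℤ) - (L:ℤ)) s ⬝ᵥ b) := by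
        funext s; ring
      rwa [h4] at h3
    have hBint : IntervalIntegrable (fun s => gammaVec L (L - (j+1)) s ⬝ᵥ w) volume 0 t :=
      (gammaVec_cont w).intervalIntegrable 0 t
    rw [intervalIntegral.integral_sub hAint hBint]
    have hBeq : ∫ s in (0:ℝ)..t, gammaVec L (L - (j+1)) s ⬝ᵥ w = gammaVec L (L - j) t ⬝ᵥ w := by
      rw [gammaVec_integral]
      have : L - (j+1) + 1 = L - j := by omega
      rw [this]
    rw [hBeq]
    congr 1
    -- A-part identity
    by_cases hcase : ((j+1:ℕ):ℤ) + (ℓ:ℤ) - (L:ℤ) = (L:ℤ)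
    · have hjL : j + 1 = L := by omega
      have hlL : ℓ = L := by omega
      have hKj : 2*L - 1 - j - ℓ = 0 := by omega
      rw [hA j (by omega) t ht, hKj, Gfun_zero_pow]
      have heq : Set.EqOn (fun s => fTilde L f (((j+1:ℕ):ℤ) + (ℓ:ℤ) - (L:ℤ)) s ⬝ᵥ b)
          (fun s => (-1:ℝ)^L * g s) (Set.uIcc 0 t) := by
        intro s _
        simp only []
        rw [hcase, fTilde_dot_top]
      rw [intervalIntegral.integral_congr heq, intervalIntegral.integral_const_mul]
      simp [Nat.factorial_zero]
    · have hj1 : ((j+1:ℕ):ℤ) + (ℓ:ℤ) - (L:ℤ) < (L:ℤ) := by omega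
      set K := 2*L - 1 - (j+1) - ℓ with hKdef
      have hKj : 2*L - 1 - j - ℓ = K + 1 := by omega
      have heq : Set.EqOn (fun s => fTilde L f (((j+1:ℕ):ℤ) + (ℓ:ℤ) - (L:ℤ)) s ⬝ᵥ b)
          (fun s => (-1:ℝ)^L / ((K.factorial : ℕ) : ℝ) * Gfun g K s) (Set.uIcc 0 t) := by
        intro s hs
        exact hA (j+1) hj1 s (ht' hs)
      rw [intervalIntegral.integral_congr heq, intervalIntegral.integral_const_mul,
        hA j (by omega) t ht, hKj, Gfun_succ hgInt K ht, intervalIntegral.integral_const_mul]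
      have h3 : ((K.factorial : ℕ) : ℝ) ≠ 0 := Nat.cast_ne_zero.mpr (Nat.factorial_ne_zero _)
      have h4 : (((K+1).factorial : ℕ) : ℝ) ≠ 0 := Nat.cast_ne_zero.mpr (Nat.factorial_ne_zero _)
      rw [Nat.factorial_succ]
      push_cast
      field_simp
  · -- MemL2
    show MemLp _ 2 _
    refine MemLp.sub ?_ ?_
    · by_cases hcase : ℓ = L
      · have heq : (fun t => fTilde L f (((L:ℕ):ℤ) + (ℓ:ℤ) - (L:ℤ)) t ⬝ᵥ b)
            = fun t => (-1:ℝ)^L * g t := by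
          funext t
          have : ((L:ℕ):ℤ) + (ℓ:ℤ) - (L:ℤ) = (L:ℤ) := by omega
          rw [this, fTilde_dot_top]
        rw [heq]
        exact hg2.const_mul _
      · have hj1 : ((L:ℕ):ℤ) + (ℓ:ℤ) - (L:ℤ) < (L:ℤ) := by omega
        have hmem0 : MemLp (fun t => (-1:ℝ)^L / (((2*L - 1 - L - ℓ).factorial : ℕ) : ℝ)
            * Gfun g (2*L - 1 - L - ℓ) t) 2 (volume.restrict (Set.Ioc 0 τ)) :=
          aux_memL2 (continuousOn_const.mul (Gfun_cont hτ.le hgInt _))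
        refine hmem0.ae_eq ?_
        filter_upwards [ae_restrict_mem measurableSet_Ioc] with t htt
        exact (hA L hj1 t (Set.Ioc_subset_Icc_self htt)).symm
    · exact aux_memL2 (gammaVec_cont w).continuousOn
  · -- boundary values
    intro j hj
    constructor
    · exact hΨ0 j hj
    · simp only []
      rw [hΨτ j hj, sub_self]
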